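/- Fix Δ ∈ (0, 1] and φ ∈ (0, π/3]. There exist constants c > 0 and ε₀ > 0 such that for every a ∈ ℝ², every unit vector d ∈ ℝ², and every ε ∈ (0, ε₀], the number of ε-granular states of size 4 satisfies |A^4(ε)| ≥ c · φ · Δ³ / ε³. -/

import Mathlib

open Real Set

noncomputable def toCCW (θ : ℝ) : ℝ := if 0 ≤ θ then θ else θ + 2 * Real.pi

noncomputable def ccwAngle (w z : ℂ) : ℝ := toCCW ((z / w).arg)

noncomputable def dhull (a d : ℂ) (φ Δ : ℝ) : Set ℂ :=
  {a} ∪ {x : ℂ | dist x a ≤ Δ ∧ ccwAngle d (x - a) ∈ Set.Ico 0 φ}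

noncomputable def dlocs (a d : ℂ) (φ Δ ε : ℝ) : Set ℂ :=
  ({a} ∪ {x : ℂ | ∃ i j : ℕ,
      x = a + ((1 + 2 * (i : ℝ)) * ε) • d + (2 * (j : ℝ) * ε) • (Complex.I * d)})
    ∩ dhull a d φ Δ

noncomputable def dtriples (a d : ℂ) (Δ ε : ℝ) : Set (Set ℂ) :=
  {T : Set ℂ | ∃ i : ℕ, 1 ≤ i ∧ (1 + 2 * (i : ℝ)) * ε ≤ Δ ∧
    T = {a, a + ε • d, a + ((1 + 2 * (i : ℝ)) * ε) • d}}

noncomputable def dstates (a d : ℂ) (φ Δ ε : ℝ) : Set (Set ℂ) :=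
  {U : Set ℂ | ∃ S ⊆ dlocs a d φ Δ ε, ∃ T ∈ dtriples a d Δ ε, U = S ∪ T}

noncomputable def dstatesOfSize (a d : ℂ) (φ Δ ε : ℝ) (ℓ : ℕ) : Set (Set ℂ) :=
  {U ∈ dstates a d φ Δ ε | U.ncard = ℓ}

/-- Auxiliary point map. -/
noncomputable def statePt (a d : ℂ) (ε : ℝ) (q : ℕ × ℕ) : ℂ :=
  a + ((1 + 2 * (q.1 : ℝ)) * ε) • d + (2 * (q.2 : ℝ) * ε) • (Complex.I * d)

/-- Auxiliary state map. -/
noncomputable def stateOf (a d : ℂ) (ε : ℝ) (t : ℕ × ℕ × ℕ) : Set ℂ :=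
  {statePt a d ε t.2} ∪ {a, a + ε • d, a + ((1 + 2 * (t.1 : ℝ)) * ε) • d}

/-- Auxiliary: the angle of a point with positive coordinates relative to `d`. -/
lemma angle_aux (d : ℂ) (hd : d ≠ 0) (φ r s : ℝ) (hr : 0 < r) (hs : 0 < s)
    (hφ0 : 0 < φ) (hφ3 : φ ≤ π / 3) (hrs : s / r ≤ φ / 2) :
    ccwAngle d (((r:ℂ) + (s:ℂ) * Complex.I) * d) ∈ Set.Ico 0 φ := by
  have hz : (((r:ℂ) + (s:ℂ) * Complex.I) * d) / d = ((r:ℂ) + (s:ℂ) * Complex.I) :=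
    mul_div_cancel_right₀ _ hd
  set z : ℂ := (r:ℂ) + (s:ℂ) * Complex.I with hzdef
  have hre : z.re = r := by simp [hzdef]
  have him : z.im = s := by simp [hzdef]
  have harg0 : 0 ≤ z.arg := Complex.arg_nonneg_iff.2 (by rw [him]; exact hs.le)
  have hccw : ccwAngle d (z * d) = z.arg := by
    rw [ccwAngle, hz, toCCW, if_pos harg0]
  rw [hccw]
  refine ⟨harg0, ?_⟩
  have hzabs : 0 < ‖z‖ := by
    refine norm_pos_iff.mpr ?_
    intro h0; rw [h0] at hre; simp at hre; linarith
  have hrle : r ≤ ‖z‖ := by rw [← hre]; exact Complex.re_le_norm z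
  have harg : z.arg = Real.arcsin (z.im / ‖z‖) :=
    Complex.arg_of_re_nonneg (by rw [hre]; exact hr.le)
  rw [harg, him]
  have h1 : s / ‖z‖ ≤ s / r := div_le_div_of_nonneg_left hs.le hr hrle
  have hπ : π ≤ 4 := by linarith [Real.pi_le_four]
  have h2 : φ / 2 < Real.sin φ := by
    have hj := Real.mul_le_sin hφ0.le (by linarith : φ ≤ π / 2)
    have h12 : (1:ℝ)/2 < 2 / π := by
      rw [lt_div_iff₀ Real.pi_pos]; linarith [Real.pi_lt_d2]
    nlinarith [Real.pi_pos]
  calc Real.arcsin (s / ‖z‖) ≤ Real.arcsin (φ / 2) :=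
        Real.monotone_arcsin (by linarith)
    _ < Real.arcsin (Real.sin φ) := by
        apply Real.strictMonoOn_arcsin ⟨by linarith, by linarith⟩
          ⟨Real.neg_one_le_sin φ, Real.sin_le_one φ⟩
        exact h2
    _ = φ := Real.arcsin_sin (by linarith [Real.pi_pos]) (by linarith)

set_option maxHeartbeats 2000000 in
theorem card_states_four_lower_bound (Δ φ : ℝ)
    (hΔ : Δ ∈ Set.Ioc (0 : ℝ) 1) (hφ : φ ∈ Set.Ioc 0 (π / 3)) :
    ∃ c > (0 : ℝ), ∃ ε₀ > (0 : ℝ), ∀ a d : ℂ, ‖d‖ = 1 → ∀ ε : ℝ, 0 < ε → ε ≤ ε₀ →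
      c * φ * Δ ^ 3 / ε ^ 3 ≤ ((dstatesOfSize a d φ Δ ε 4).ncard : ℝ) := by
  obtain ⟨hΔ0, hΔ1⟩ := hΔ
  obtain ⟨hφ0, hφ3⟩ := hφ
  have hπ4 : π ≤ 4 := by linarith [Real.pi_le_four]
  have hφ2 : φ ≤ 2 := by linarith
  refine ⟨1/16384, by norm_num, φ * Δ / 64, by positivity, ?_⟩
  intro a d hd ε hε0 hεle
  have hd0 : d ≠ 0 := by intro h; rw [h] at hd; simp at hd
  have habsd : ‖d‖ = 1 := hd
  have hφΔ : φ * Δ ≤ 4/3 * Δ := mul_le_mul_of_nonneg_right (by linarith) hΔ0.le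
  have hε48 : ε ≤ Δ / 48 := by linarith
  have hjp : ∀ x : ℝ, 1 ≤ x → 0 < 2*x*ε := fun x hx => by nlinarith
  have hip : ∀ x : ℝ, 0 ≤ x → 0 < (1+2*x)*ε := fun x hx => by nlinarith
  have h2ip : ∀ x : ℝ, 1 ≤ x → ε < (1+2*x)*ε := fun x hx => by nlinarith
  -- coordinate algebra
  have hpt : ∀ r s : ℝ, a + r • d + s • (Complex.I * d)
      = a + ((r:ℂ) + (s:ℂ) * Complex.I) * d := by
    intro r s; simp [Complex.real_smul]; ring
  have hpt' : ∀ r : ℝ, a + r • d = a + ((r:ℂ) + ((0:ℝ):ℂ) * Complex.I) * d := by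
    intro r; simp [Complex.real_smul]
  have hpa : a = a + (((0:ℝ):ℂ) + ((0:ℝ):ℂ) * Complex.I) * d := by simp
  have key : ∀ r s r' s' : ℝ,
      a + ((r:ℂ) + (s:ℂ) * Complex.I) * d = a + ((r':ℂ) + (s':ℂ) * Complex.I) * d →
      r = r' ∧ s = s' := by
    intro r s r' s' h
    have h2 := mul_right_cancel₀ hd0 (add_left_cancel h)
    simpa [Complex.ext_iff] using h2
  have kgg : ∀ r s r' s' : ℝ, a + r • d + s • (Complex.I * d)
      = a + r' • d + s' • (Complex.I * d) → r = r' ∧ s = s' := by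
    intro r s r' s' h; apply key; rw [← hpt, ← hpt]; exact h
  have kga : ∀ r s : ℝ, a + r • d + s • (Complex.I * d) = a → r = 0 ∧ s = 0 := by
    intro r s h; apply key; rw [← hpt, ← hpa]; exact h
  have kgl : ∀ r s r' : ℝ, a + r • d + s • (Complex.I * d) = a + r' • d → r = r' ∧ s = 0 := by
    intro r s r' h; apply key; rw [← hpt, ← hpt']; exact h
  have klin : ∀ r r' : ℝ, a + r • d = a + r' • d → r = r' := by
    intro r r' h
    exact (key r 0 r' 0 (by rw [← hpt', ← hpt']; exact h)).1
  have kla : ∀ r : ℝ, a + r • d = a → r = 0 := by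
    intro r h
    exact (key r 0 0 0 (by rw [← hpt', ← hpa]; exact h)).1
  have hnat : ∀ i j : ℕ, (1 + 2*(i:ℝ))*ε = (1 + 2*(j:ℝ))*ε → i = j := by
    intro i j h
    have h2 : (1:ℝ) + 2*(i:ℝ) = 1 + 2*(j:ℝ) := mul_right_cancel₀ hε0.ne' h
    have : (i:ℝ) = j := by linarith
    exact_mod_cast this
  have hnat2 : ∀ i j : ℕ, 2*(i:ℝ)*ε = 2*(j:ℝ)*ε → i = j := by
    intro i j h
    have : (i:ℝ) = j := by
      have := mul_right_cancel₀ hε0.ne' h; linarith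
    exact_mod_cast this
  -- numerics
  obtain ⟨n, hn⟩ : ∃ m : ℕ, m = ⌊Δ / (8*ε)⌋₊ := ⟨_, rfl⟩
  have h86 : (6:ℝ) ≤ Δ / (8*ε) := by
    rw [le_div_iff₀ (by positivity)]; linarith
  have hn6 : 6 ≤ n := by rw [hn]; exact Nat.le_floor (by exact_mod_cast h86)
  have hn_up : (n:ℝ) ≤ Δ / (8*ε) := by rw [hn]; exact Nat.floor_le (by positivity)
  have hn_low : Δ / (16*ε) ≤ (n:ℝ) := by
    have h1 : Δ / (8*ε) < (n:ℝ) + 1 := by rw [hn]; exact Nat.lt_floor_add_one _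
    have h2 : Δ / (16*ε) + Δ / (16*ε) = Δ / (8*ε) := by ring
    linarith
  have hφn : 4 ≤ φ * n := by
    have h4 : 4 / φ ≤ Δ / (16*ε) := by
      rw [div_le_div_iff₀ hφ0 (by positivity)]; linarith
    calc (4:ℝ) = φ * (4/φ) := by field_simp
      _ ≤ φ * n := by
          apply mul_le_mul_of_nonneg_left _ hφ0.le
          linarith
  obtain ⟨J, hJdef⟩ : ∃ m : ℕ, m = ⌊φ * n / 2⌋₊ := ⟨_, rfl⟩
  have hJ_up : (J:ℝ) ≤ φ * n / 2 := by rw [hJdef]; exact Nat.floor_le (by positivity)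
  have hJ_low : φ * n / 4 ≤ (J:ℝ) := by
    have h1 : φ * n / 2 < (J:ℝ) + 1 := by rw [hJdef]; exact Nat.lt_floor_add_one _
    linarith
  have hJ1 : 1 ≤ J := by rw [hJdef]; exact Nat.le_floor (by push_cast; linarith)
  have hnε : (n:ℝ) * ε ≤ Δ / 8 := by
    have h := mul_le_mul_of_nonneg_right hn_up hε0.le
    have h2 : Δ / (8*ε) * ε = Δ / 8 := by field_simp
    linarith
  have htri : ∀ i : ℕ, i ≤ n → (1 + 2*(i:ℝ))*ε ≤ Δ := by
    intro i hi
    have hi' : (i:ℝ) ≤ n := by exact_mod_cast hi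
    have : (i:ℝ) * ε ≤ (n:ℝ) * ε := mul_le_mul_of_nonneg_right hi' hε0.le
    linarith
  -- hull membership of chosen grid points
  have hgrid : ∀ i j : ℕ, n ≤ i → i ≤ 2*n → 1 ≤ j → j ≤ J →
      (a + ((1 + 2*(i:ℝ))*ε) • d + (2*(j:ℝ)*ε) • (Complex.I*d)) ∈ dhull a d φ Δ := by
    intro i j hi1 hi2 hj1 hj2
    have hi1' : (n:ℝ) ≤ i := by exact_mod_cast hi1
    have hi2' : (i:ℝ) ≤ 2*n := by exact_mod_cast hi2
    have hj1' : (1:ℝ) ≤ j := by exact_mod_cast hj1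
    have hj2' : (j:ℝ) ≤ J := by exact_mod_cast hj2
    have hn6' : (6:ℝ) ≤ n := by exact_mod_cast hn6
    have hr0 : 0 < (1 + 2*(i:ℝ))*ε := by positivity
    have hs0 : 0 < 2*(j:ℝ)*ε := hjp _ hj1'
    have hiε : (i:ℝ)*ε ≤ 2*((n:ℝ)*ε) := by
      have := mul_le_mul_of_nonneg_right hi2' hε0.le
      linarith
    have hnε' : (n:ℝ)*ε ≤ (i:ℝ)*ε := mul_le_mul_of_nonneg_right hi1' hε0.le
    have hJε : (j:ℝ)*ε ≤ (J:ℝ)*ε := mul_le_mul_of_nonneg_right hj2' hε0.le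
    have hJε2 : (J:ℝ)*ε ≤ φ*(n:ℝ)/2*ε := mul_le_mul_of_nonneg_right hJ_up hε0.le
    right
    constructor
    · -- distance bound
      rw [hpt ((1 + 2*(i:ℝ))*ε) (2*(j:ℝ)*ε), Complex.dist_eq]
      have he : a + ((((1 + 2*(i:ℝ))*ε :ℝ):ℂ) + ((2*(j:ℝ)*ε :ℝ):ℂ) * Complex.I) * d - a
          = ((((1 + 2*(i:ℝ))*ε :ℝ):ℂ) + ((2*(j:ℝ)*ε :ℝ):ℂ) * Complex.I) * d := by ring
      rw [he, norm_mul, habsd, mul_one]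
      have hb := Complex.norm_le_abs_re_add_abs_im
        ((((1 + 2*(i:ℝ))*ε :ℝ):ℂ) + ((2*(j:ℝ)*ε :ℝ):ℂ) * Complex.I)
      have hre : ((((1 + 2*(i:ℝ))*ε :ℝ):ℂ) + ((2*(j:ℝ)*ε :ℝ):ℂ) * Complex.I).re
          = (1 + 2*(i:ℝ))*ε := by simp
      have him : ((((1 + 2*(i:ℝ))*ε :ℝ):ℂ) + ((2*(j:ℝ)*ε :ℝ):ℂ) * Complex.I).im
          = 2*(j:ℝ)*ε := by simp
      rw [hre, him, abs_of_pos hr0, abs_of_pos hs0] at hb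
      have h1 : (1 + 2*(i:ℝ))*ε ≤ ε + 4*((n:ℝ)*ε) := by linarith
      have h2 : 2*(j:ℝ)*ε ≤ φ * ((n:ℝ)*ε) := by linarith
      have h3 : φ * ((n:ℝ)*ε) ≤ 2 * (Δ/8) := by
        have hnε0 : (0:ℝ) ≤ (n:ℝ)*ε := by positivity
        calc φ * ((n:ℝ)*ε) ≤ 2 * ((n:ℝ)*ε) := mul_le_mul_of_nonneg_right hφ2 hnε0
          _ ≤ 2 * (Δ/8) := by linarith
      linarith
    · -- angle bound
      have he : a + ((1 + 2*(i:ℝ))*ε) • d + (2*(j:ℝ)*ε) • (Complex.I * d) - a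
          = ((((1 + 2*(i:ℝ))*ε :ℝ):ℂ) + ((2*(j:ℝ)*ε :ℝ):ℂ) * Complex.I) * d := by
        rw [hpt ((1 + 2*(i:ℝ))*ε) (2*(j:ℝ)*ε)]; ring
      rw [he]
      apply angle_aux d hd0 φ _ _ hr0 hs0 hφ0 hφ3
      rw [div_le_iff₀ hr0]
      have h4 : φ/2*(2*((n:ℝ)*ε)) ≤ φ/2*((1+2*(i:ℝ))*ε) := by
        apply mul_le_mul_of_nonneg_left _ (by positivity)
        linarith
      linarith
  -- the index set
  set Idx : Finset (ℕ × ℕ × ℕ) :=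
    Finset.Icc 1 n ×ˢ Finset.Icc n (2*n) ×ˢ Finset.Icc 1 J with hIdx
  have hIdxmem : ∀ t : ℕ × ℕ × ℕ, t ∈ Idx ↔
      (1 ≤ t.1 ∧ t.1 ≤ n) ∧ (n ≤ t.2.1 ∧ t.2.1 ≤ 2*n) ∧ (1 ≤ t.2.2 ∧ t.2.2 ≤ J) := by
    intro t
    simp [hIdx, Finset.mem_product, Finset.mem_Icc]
  have hmem : ∀ t ∈ Idx, stateOf a d ε t ∈ dstatesOfSize a d φ Δ ε 4 := by
    intro t ht
    obtain ⟨⟨ht11, ht12⟩, ⟨ht21, ht22⟩, ht31, ht32⟩ := (hIdxmem t).1 ht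
    have hj1' : (1:ℝ) ≤ t.2.2 := by exact_mod_cast ht31
    have hi1 : (1:ℝ) ≤ t.1 := by exact_mod_cast ht11
    constructor
    · -- membership in dstates
      refine ⟨{statePt a d ε t.2}, ?_, {a, a + ε • d, a + ((1 + 2*(t.1:ℝ))*ε) • d}, ?_, rfl⟩
      · rw [Set.singleton_subset_iff]
        exact ⟨Or.inr ⟨t.2.1, t.2.2, rfl⟩, hgrid t.2.1 t.2.2 ht21 ht22 ht31 ht32⟩
      · exact ⟨t.1, ht11, htri t.1 ht12, rfl⟩
    · -- cardinality is 4
      have hne1 : statePt a d ε t.2 ∉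
          ({a, a + ε • d, a + ((1 + 2*(t.1:ℝ))*ε) • d} : Set ℂ) := by
        intro h
        simp only [statePt, Set.mem_insert_iff, Set.mem_singleton_iff] at h
        rcases h with h | h | h
        · exact absurd (kga _ _ h).2 (hjp _ hj1').ne'
        · exact absurd (kgl _ _ _ h).2 (hjp _ hj1').ne'
        · exact absurd (kgl _ _ _ h).2 (hjp _ hj1').ne'
      have hne2 : a ∉ ({a + ε • d, a + ((1 + 2*(t.1:ℝ))*ε) • d} : Set ℂ) := by
        intro h
        simp only [Set.mem_insert_iff, Set.mem_singleton_iff] at h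
        rcases h with h | h
        · exact absurd (kla _ h.symm) hε0.ne'
        · exact absurd (kla _ h.symm) (hip _ (Nat.cast_nonneg _)).ne'
      have hne3 : (a + ε • d) ∉ ({a + ((1 + 2*(t.1:ℝ))*ε) • d} : Set ℂ) := by
        intro h
        rw [Set.mem_singleton_iff] at h
        exact absurd (klin _ _ h) (h2ip _ hi1).ne
      rw [stateOf]
      rw [Set.singleton_union, Set.ncard_insert_of_notMem hne1,
        Set.ncard_insert_of_notMem hne2, Set.ncard_insert_of_notMem hne3,
        Set.ncard_singleton]
  -- injectivity
  have hinj : Set.InjOn (stateOf a d ε) ↑Idx := by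
    rintro ⟨i1, k1, j1⟩ ht1 ⟨i2, k2, j2⟩ ht2 h
    obtain ⟨⟨h111, h112⟩, ⟨h121, h122⟩, h131, h132⟩ := (hIdxmem _).1 (Finset.mem_coe.1 ht1)
    obtain ⟨⟨h211, h212⟩, ⟨h221, h222⟩, h231, h232⟩ := (hIdxmem _).1 (Finset.mem_coe.1 ht2)
    simp only at h111 h112 h121 h122 h131 h132 h211 h212 h221 h222 h231 h232
    have hj1' : (1:ℝ) ≤ j1 := by exact_mod_cast h131
    have hj2' : (1:ℝ) ≤ j2 := by exact_mod_cast h231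
    have hi1' : (1:ℝ) ≤ i1 := by exact_mod_cast h111
    have hm : statePt a d ε (k1, j1) ∈ stateOf a d ε (i2, k2, j2) := by
      rw [← h]; exact Or.inl rfl
    simp only [stateOf, statePt, Set.mem_union, Set.mem_singleton_iff,
      Set.mem_insert_iff] at hm
    have hkj : k1 = k2 ∧ j1 = j2 := by
      rcases hm with hm | hm | hm | hm
      · obtain ⟨e1, e2⟩ := kgg _ _ _ _ hm
        exact ⟨hnat _ _ e1, hnat2 _ _ e2⟩
      · exact absurd (kga _ _ hm).2 (hjp _ hj1').ne'
      · exact absurd (kgl _ _ _ hm).2 (hjp _ hj1').ne'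
      · exact absurd (kgl _ _ _ hm).2 (hjp _ hj1').ne'
    have hm2 : (a + ((1 + 2*(i1:ℝ))*ε) • d) ∈ stateOf a d ε (i2, k2, j2) := by
      rw [← h]
      exact Or.inr (Or.inr (Or.inr rfl))
    simp only [stateOf, statePt, Set.mem_union, Set.mem_singleton_iff,
      Set.mem_insert_iff] at hm2
    have hii : i1 = i2 := by
      rcases hm2 with hm2 | hm2 | hm2 | hm2
      · exact absurd (kgl _ _ _ hm2.symm).2 (hjp _ hj2').ne'
      · exact absurd (kla _ hm2) (hip _ (Nat.cast_nonneg _)).ne'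
      · exact absurd (klin _ _ hm2) (h2ip _ hi1').ne'
      · exact hnat _ _ (klin _ _ hm2)
    simp [hii, hkj.1, hkj.2]
  -- finiteness
  obtain ⟨N, hN⟩ : ∃ m : ℕ, m = ⌊Δ/ε⌋₊ := ⟨_, rfl⟩
  have hfin : (dstatesOfSize a d φ Δ ε 4).Finite := by
    have hGfin : (({a} : Set ℂ) ∪ statePt a d ε '' (Set.Iic N ×ˢ Set.Iic N)).Finite :=
      (Set.finite_singleton a).union (((Set.finite_Iic N).prod (Set.finite_Iic N)).image _)
    apply hGfin.finite_subsets.subset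
    rintro U ⟨⟨S, hS, T, ⟨i, hi1, hile, hTeq⟩, hUeq⟩, -⟩
    have hiN : i ≤ N := by
      rw [hN]
      apply Nat.le_floor
      rw [le_div_iff₀ hε0]
      linarith
    rw [Set.mem_setOf_eq, hUeq]
    apply Set.union_subset
    · refine hS.trans ?_
      rintro x ⟨hx1, hx2⟩
      rcases hx1 with hx1 | ⟨i', j', rfl⟩
      · exact Or.inl hx1
      · rcases hx2 with hx2 | ⟨hdist, -⟩
        · exact Or.inl hx2
        · right
          rw [hpt ((1 + 2*(i':ℝ))*ε) (2*(j':ℝ)*ε), Complex.dist_eq] at hdist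
          have he : a + ((((1 + 2*(i':ℝ))*ε :ℝ):ℂ) + ((2*(j':ℝ)*ε :ℝ):ℂ) * Complex.I) * d - a
              = ((((1 + 2*(i':ℝ))*ε :ℝ):ℂ) + ((2*(j':ℝ)*ε :ℝ):ℂ) * Complex.I) * d := by ring
          rw [he, norm_mul, habsd, mul_one] at hdist
          have hre2 := Complex.re_le_norm
            ((((1 + 2*(i':ℝ))*ε :ℝ):ℂ) + ((2*(j':ℝ)*ε :ℝ):ℂ) * Complex.I)
          have him2 := Complex.abs_im_le_norm
            ((((1 + 2*(i':ℝ))*ε :ℝ):ℂ) + ((2*(j':ℝ)*ε :ℝ):ℂ) * Complex.I)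
          have hre : ((((1 + 2*(i':ℝ))*ε :ℝ):ℂ) + ((2*(j':ℝ)*ε :ℝ):ℂ) * Complex.I).re
              = (1 + 2*(i':ℝ))*ε := by simp
          have him : ((((1 + 2*(i':ℝ))*ε :ℝ):ℂ) + ((2*(j':ℝ)*ε :ℝ):ℂ) * Complex.I).im
              = 2*(j':ℝ)*ε := by simp
          rw [hre] at hre2
          rw [him] at him2
          have hj'0 : (0:ℝ) ≤ 2*(j':ℝ)*ε := by positivity
          rw [abs_of_nonneg hj'0] at him2
          refine ⟨(i', j'), ⟨?_, ?_⟩, rfl⟩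
          · rw [Set.mem_Iic, hN]
            apply Nat.le_floor
            rw [le_div_iff₀ hε0]
            linarith
          · rw [Set.mem_Iic, hN]
            apply Nat.le_floor
            rw [le_div_iff₀ hε0]
            linarith
    · rw [hTeq]
      intro x hx
      simp only [Set.mem_insert_iff, Set.mem_singleton_iff] at hx
      rcases hx with rfl | rfl | rfl
      · exact Or.inl rfl
      · refine Or.inr ⟨(0, 0), ⟨Set.mem_Iic.2 (Nat.zero_le _), Set.mem_Iic.2 (Nat.zero_le _)⟩, ?_⟩
        simp [statePt]
      · refine Or.inr ⟨(i, 0), ⟨Set.mem_Iic.2 hiN, Set.mem_Iic.2 (Nat.zero_le _)⟩, ?_⟩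
        simp [statePt]
  -- put everything together
  have himgsub : stateOf a d ε '' ↑Idx ⊆ dstatesOfSize a d φ Δ ε 4 := by
    rintro _ ⟨t, ht, rfl⟩
    exact hmem t (Finset.mem_coe.1 ht)
  have hcount : (Idx.card : ℝ) ≤ ((dstatesOfSize a d φ Δ ε 4).ncard : ℝ) := by
    have h1 := Set.ncard_le_ncard himgsub hfin
    rw [Set.ncard_image_of_injOn hinj, Set.ncard_coe_finset] at h1
    exact_mod_cast h1
  have hcard : Idx.card = n * ((n + 1) * J) := by
    rw [hIdx]
    rw [Finset.card_product, Finset.card_product, Nat.card_Icc, Nat.card_Icc, Nat.card_Icc]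
    have e1 : n + 1 - 1 = n := by omega
    have e2 : 2*n + 1 - n = n + 1 := by omega
    have e3 : J + 1 - 1 = J := by omega
    rw [e1, e2, e3]
  have hfinal : 1/16384 * φ * Δ^3 / ε^3 ≤ (n:ℝ) * (((n:ℝ) + 1) * (J:ℝ)) := by
    have hA0 : 0 < Δ / (16*ε) := by positivity
    have e1 : 1/16384 * φ * Δ^3 / ε^3 = (Δ/(16*ε))^2 * (φ * (Δ/(16*ε)) / 4) := by
      field_simp; ring
    rw [e1]
    have s1 : (Δ/(16*ε))^2 ≤ (n:ℝ)^2 := pow_le_pow_left₀ hA0.le hn_low 2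
    have s2 : φ * (Δ/(16*ε)) / 4 ≤ (J:ℝ) := by
      have := mul_le_mul_of_nonneg_left hn_low hφ0.le
      linarith
    have s3 : (Δ/(16*ε))^2 * (φ * (Δ/(16*ε)) / 4) ≤ (n:ℝ)^2 * (J:ℝ) :=
      mul_le_mul s1 s2 (by positivity) (by positivity)
    have hn0 : (0:ℝ) ≤ n := Nat.cast_nonneg n
    have hJ0 : (0:ℝ) ≤ J := Nat.cast_nonneg J
    have s4 : (n:ℝ)^2*(J:ℝ) ≤ (n:ℝ)*(((n:ℝ)+1)*(J:ℝ)) := by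
      have h5 : (n:ℝ)^2 ≤ (n:ℝ)*((n:ℝ)+1) := by nlinarith
      have := mul_le_mul_of_nonneg_right h5 hJ0
      linarith [this]
      
    linarith
  have hcast : ((Idx.card : ℕ) : ℝ) = (n:ℝ) * (((n:ℝ) + 1) * (J:ℝ)) := by
    rw [hcard]; push_cast; ring
  rw [hcast] at hcount
  linarith
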